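/- Let S₁, S₂ ⊆ {0,1}^d be strongly base orderable matroids and S := S₁ ∩ S₂. Then [S₁^n] ∩ [S₂^n] = [S^n], i.e., a 0-1 matrix is simultaneously equivalent to a matrix with all columns in S₁ and to a matrix with all columns in S₂ if and only if it is equivalent to a matrix with all columns in S₁ ∩ S₂. -/
import Mathlib


def Eqv {d n : ℕ} (x y : Fin d → Fin n → ℕ) : Prop :=
  ∀ i : Fin d, ∃ σ : Equiv.Perm (Fin n), ∀ j, x i j = y i (σ j)

/-- `[Sⁿ]`: the set of matrices equivalent to some matrix all of whose columns lie in `S`. -/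
def SBracket {d : ℕ} (n : ℕ) (S : Set (Fin d → ℕ)) : Set (Fin d → Fin n → ℕ) :=
  {x | ∃ y : Fin d → Fin n → ℕ, (∀ j, (fun i => y i j) ∈ S) ∧ Eqv x y}

def IsMatroid {E : Type*} [Fintype E] [DecidableEq E] (S : Set (E → ℕ)) : Prop :=
  (∀ z ∈ S, ∀ i, z i ≤ 1) ∧
  ((fun _ => 0) ∈ S) ∧
  (∀ x ∈ S, ∀ y : E → ℕ, (∀ i, y i ≤ x i) → y ∈ S) ∧
  (∀ x ∈ S, ∀ y ∈ S, (∑ i, y i) < (∑ i, x i) →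
    ∃ i, x i = 1 ∧ y i = 0 ∧ Function.update y i 1 ∈ S)

def IsBaseV {E : Type*} (S : Set (E → ℕ)) (z : E → ℕ) : Prop :=
  z ∈ S ∧ ∀ w ∈ S, (∀ i, z i ≤ w i) → w = z

noncomputable def indFun {E : Type*} (A : Set E) : E → ℕ := A.indicator 1

def IsSBO {E : Type*} (S : Set (E → ℕ)) : Prop :=
  ∀ z w : E → ℕ, IsBaseV S z → IsBaseV S w →
    ∃ π : E → E, Set.BijOn π {i | z i = 1} {i | w i = 1} ∧
      ∀ I ⊆ {i | z i = 1}, IsBaseV S (indFun (π '' I ∪ ({i | z i = 1} \ I)))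


/-- The `n`-union of a set `T` of 0-1 vectors on a ground set `E`: sums of `n` members
of `T` with pairwise disjoint supports. -/
def NUnion {E : Type*} [Fintype E] (n : ℕ) (T : Set (E → ℕ)) : Set (E → ℕ) :=
  {x | ∃ f : Fin n → E → ℕ, (∀ k, f k ∈ T) ∧
    (∀ k l, k ≠ l → ∀ i, f k i = 0 ∨ f l i = 0) ∧ ∀ i, x i = ∑ k, f k i}
section Aux

variable {d n : ℕ}

/-- Row-sum projection from the product ground set to `Fin d`. -/
def projRow (n : ℕ) {d : ℕ} (z : Fin d × Fin n → ℕ) : Fin d → ℕ := fun i => ∑ j, z (i, j)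

/-- Lift of `S` to the ground set `Fin d × Fin n` (n parallel copies of each element). -/
def Lift (n : ℕ) {d : ℕ} (S : Set (Fin d → ℕ)) : Set (Fin d × Fin n → ℕ) :=
  {z | (∀ p, z p ≤ 1) ∧ projRow n z ∈ S}

lemma entry_le_row (z : Fin d × Fin n → ℕ) (i : Fin d) (j : Fin n) :
    z (i, j) ≤ projRow n z i := by
  unfold projRow
  exact Finset.single_le_sum (f := fun j => z (i, j)) (fun _ _ => Nat.zero_le _) (Finset.mem_univ j)

lemma row_unique {z : Fin d × Fin n → ℕ} {i : Fin d} (hrow : projRow n z i ≤ 1)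
    {j j' : Fin n} (h1 : z (i, j) = 1) (h2 : z (i, j') = 1) : j = j' := by
  by_contra hne
  have h : ({j, j'} : Finset (Fin n)).sum (fun j => z (i, j)) ≤ projRow n z i :=
    Finset.sum_le_sum_of_subset (Finset.subset_univ _)
  rw [Finset.sum_pair hne, h1, h2] at h
  omega

lemma row_exists {z : Fin d × Fin n → ℕ} {i : Fin d} (hle : ∀ p, z p ≤ 1)
    (h : projRow n z i = 1) : ∃ j, z (i, j) = 1 := by
  by_contra h'
  push_neg at h'
  have hz : ∀ j, z (i, j) = 0 := fun j => by have := hle (i, j); have := h' j; omega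
  have : projRow n z i = 0 := Finset.sum_eq_zero (fun j _ => hz j)
  omega

lemma row_zero {z : Fin d × Fin n → ℕ} {i : Fin d} (h : projRow n z i = 0) (j : Fin n) :
    z (i, j) = 0 := by
  have := entry_le_row z i j; omega

lemma sum_proj (z : Fin d × Fin n → ℕ) : ∑ p, z p = ∑ i, projRow n z i := by
  rw [Fintype.sum_prod_type]; rfl

lemma proj_update {z : Fin d × Fin n → ℕ} {i : Fin d} {j : Fin n} (hz : z (i, j) = 0) :
    projRow n (Function.update z (i, j) 1) = Function.update (projRow n z) i (projRow n z i + 1) := by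
  funext i'
  by_cases hi : i' = i
  · subst hi
    rw [Function.update_self]
    unfold projRow
    have : ∀ j' : Fin n, Function.update z (i', j) 1 (i', j') = z (i', j') + (if j' = j then 1 else 0) := by
      intro j'
      by_cases hj : j' = j
      · subst hj; rw [Function.update_self, hz]; simp
      · rw [Function.update_of_ne (by simp [hj]), if_neg hj]; ring
    rw [Finset.sum_congr rfl (fun j' _ => this j'), Finset.sum_add_distrib, Finset.sum_ite_eq' _ j]
    simp
  · rw [Function.update_of_ne hi]
    unfold projRow
    exact Finset.sum_congr rfl (fun j' _ => Function.update_of_ne (by simp [hi]) _ _)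

lemma eq_of_le_of_sum_le {α : Type*} [Fintype α] {a b : α → ℕ} (h : ∀ p, a p ≤ b p)
    (hs : ∑ p, b p ≤ ∑ p, a p) : b = a := by
  funext p
  by_contra hne
  have : ∑ p, a p < ∑ p, b p :=
    Finset.sum_lt_sum (fun i _ => h i) ⟨p, Finset.mem_univ p, lt_of_le_of_ne (h p) (Ne.symm hne)⟩
  omega

lemma lift_matroid {S : Set (Fin d → ℕ)} (hM : IsMatroid S) : IsMatroid (Lift n S) := by
  obtain ⟨h01, h0, hdown, hexch⟩ := hM
  refine ⟨fun z hz p => hz.1 p, ⟨fun p => by simp, by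
    have hp : projRow n (fun _ => 0 : Fin d × Fin n → ℕ) = fun _ => 0 := by
      funext i; exact Finset.sum_eq_zero fun _ _ => rfl
    rw [hp]; exact h0⟩, ?_, ?_⟩
  · rintro x ⟨hx1, hxS⟩ y hy
    refine ⟨fun p => le_trans (hy p) (hx1 p), hdown _ hxS _ (fun i => ?_)⟩
    exact Finset.sum_le_sum (fun j _ => hy (i, j))
  · rintro x ⟨hx1, hxS⟩ z ⟨hz1, hzS⟩ hlt
    rw [sum_proj, sum_proj] at hlt
    obtain ⟨i, hxi, hzi, hupd⟩ := hexch _ hxS _ hzS hlt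
    obtain ⟨j, hj⟩ := row_exists hx1 hxi
    have hzij : z (i, j) = 0 := row_zero hzi j
    refine ⟨(i, j), hj, hzij, fun p => ?_, ?_⟩
    · by_cases hp : p = (i, j)
      · subst hp; rw [Function.update_self]
      · rw [Function.update_of_ne hp]; exact hz1 p
    · rw [proj_update hzij, hzi]
      exact hupd

end Aux
section Aux2

variable {d n : ℕ}

lemma base_sum_eq {E : Type*} [Fintype E] [DecidableEq E] {S : Set (E → ℕ)}
    (hM : IsMatroid S) {x y : E → ℕ} (hx : IsBaseV S x) (hy : IsBaseV S y) :
    ∑ i, x i = ∑ i, y i := by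
  obtain ⟨h01, h0, hdown, hexch⟩ := hM
  by_contra hne
  rcases Nat.lt_or_ge (∑ i, y i) (∑ i, x i) with h | h
  · obtain ⟨i, hxi, hyi, hupd⟩ := hexch _ hx.1 _ hy.1 h
    have := hy.2 _ hupd (fun i' => by
      by_cases hi : i' = i
      · subst hi; rw [Function.update_self]; omega
      · rw [Function.update_of_ne hi])
    have := congrFun this i
    rw [Function.update_self] at this
    omega
  · have hlt : ∑ i, x i < ∑ i, y i := lt_of_le_of_ne h hne
    obtain ⟨i, hyi, hxi, hupd⟩ := hexch _ hy.1 _ hx.1 hlt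
    have := hx.2 _ hupd (fun i' => by
      by_cases hi : i' = i
      · subst hi; rw [Function.update_self]; omega
      · rw [Function.update_of_ne hi])
    have := congrFun this i
    rw [Function.update_self] at this
    omega

lemma indFun_apply {E : Type*} (A : Set E) (i : E) [Decidable (i ∈ A)] :
    indFun A i = if i ∈ A then 1 else 0 := by
  by_cases h : i ∈ A
  · rw [if_pos h]; exact Set.indicator_of_mem h 1
  · rw [if_neg h]; exact Set.indicator_of_notMem h 1

lemma indFun_le_one {E : Type*} (A : Set E) (i : E) : indFun A i ≤ 1 := by
  classical
  rw [indFun_apply]; split <;> omega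

lemma sum_indFun {E : Type*} [Fintype E] [DecidableEq E] (A : Set E) :
    ∑ i, indFun A i = A.ncard := by
  classical
  rw [Finset.sum_congr rfl (fun i _ => indFun_apply A i), Finset.sum_boole,
    Set.ncard_eq_toFinset_card']
  simp only [Nat.cast_id]
  congr 1
  ext i
  simp

lemma lift_base {S : Set (Fin d → ℕ)} (hn : 0 < n) (hM : IsMatroid S)
    {z : Fin d × Fin n → ℕ} :
    IsBaseV (Lift n S) z ↔ z ∈ Lift n S ∧ IsBaseV S (projRow n z) := by
  obtain ⟨h01, h0, hdown, hexch⟩ := hM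
  constructor
  · rintro ⟨hzL, hzmax⟩
    refine ⟨hzL, hzL.2, fun v hv hle => ?_⟩
    by_contra hne
    have : ∃ i, projRow n z i < v i := by
      by_contra hc
      push_neg at hc
      exact hne (funext fun i => le_antisymm (hc i) (hle i))
    obtain ⟨i, hi⟩ := this
    have hvi : v i ≤ 1 := h01 _ hv i
    have hzi : projRow n z i = 0 := by omega
    have hvi1 : v i = 1 := by omega
    set j0 : Fin n := ⟨0, hn⟩
    have hz0 : z (i, j0) = 0 := row_zero hzi j0
    have hupd : Function.update z (i, j0) 1 ∈ Lift n S := by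
      refine ⟨fun p => ?_, ?_⟩
      · by_cases hp : p = (i, j0)
        · subst hp; rw [Function.update_self]
        · rw [Function.update_of_ne hp]; exact hzL.1 p
      · rw [proj_update hz0, hzi]
        refine hdown _ hv _ (fun i' => ?_)
        by_cases hi' : i' = i
        · subst hi'; rw [Function.update_self]; omega
        · rw [Function.update_of_ne hi']; exact hle i'
    have := hzmax _ hupd (fun p => by
      by_cases hp : p = (i, j0)
      · subst hp; rw [Function.update_self, hz0]; omega
      · rw [Function.update_of_ne hp])
    have := congrFun this (i, j0)
    rw [Function.update_self, hz0] at this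
    omega
  · rintro ⟨hzL, hpS, hpmax⟩
    refine ⟨hzL, fun w hw hle => ?_⟩
    have hple : ∀ i, projRow n z i ≤ projRow n w i :=
      fun i => Finset.sum_le_sum (fun j _ => hle (i, j))
    have hpeq : projRow n w = projRow n z := hpmax _ hw.2 hple
    have hsum : ∑ p, w p ≤ ∑ p, z p := by
      rw [sum_proj, sum_proj, hpeq]
    exact eq_of_le_of_sum_le hle hsum

lemma lift_inter {S₁ S₂ : Set (Fin d → ℕ)} :
    Lift n S₁ ∩ Lift n S₂ = Lift n (S₁ ∩ S₂) := by
  ext z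
  constructor
  · rintro ⟨⟨h1, hS1⟩, ⟨_, hS2⟩⟩; exact ⟨h1, hS1, hS2⟩
  · rintro ⟨h1, hS1, hS2⟩; exact ⟨⟨h1, hS1⟩, ⟨h1, hS2⟩⟩

end Aux2
section Aux3

variable {d n : ℕ}

lemma lift_sbo {S : Set (Fin d → ℕ)} (hn : 0 < n) (hM : IsMatroid S) (hS : IsSBO S) :
    IsSBO (Lift n S) := by
  classical
  intro z w hz hw
  obtain ⟨hzL, hzB⟩ := (lift_base hn hM).mp hz
  obtain ⟨hwL, hwB⟩ := (lift_base hn hM).mp hw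
  obtain ⟨π, hπ, hswap⟩ := hS _ _ hzB hwB
  set Zs : Set (Fin d) := {i | projRow n z i = 1} with hZsdef
  set Ws : Set (Fin d) := {i | projRow n w i = 1} with hWsdef
  have hzrow : ∀ i, projRow n z i ≤ 1 := hM.1 _ hzB.1
  have hwrow : ∀ i, projRow n w i ≤ 1 := hM.1 _ hwB.1
  set jz : Fin d → Fin n := fun i => if h : ∃ j, z (i, j) = 1 then h.choose else ⟨0, hn⟩ with hjz
  set jw : Fin d → Fin n := fun i => if h : ∃ j, w (i, j) = 1 then h.choose else ⟨0, hn⟩ with hjw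
  have hjz1 : ∀ i ∈ Zs, z (i, jz i) = 1 := by
    intro i hi
    have h : ∃ j, z (i, j) = 1 := row_exists hzL.1 hi
    simp only [hjz, dif_pos h]
    exact h.choose_spec
  have hjw1 : ∀ i ∈ Ws, w (i, jw i) = 1 := by
    intro i hi
    have h : ∃ j, w (i, j) = 1 := row_exists hwL.1 hi
    simp only [hjw, dif_pos h]
    exact h.choose_spec
  have memZ : ∀ {i j}, z (i, j) = 1 → i ∈ Zs := by
    intro i j hj
    have h1 := entry_le_row z i j
    have h2 := hzrow i
    simp only [hZsdef, Set.mem_setOf_eq]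
    omega
  have memW : ∀ {i j}, w (i, j) = 1 → i ∈ Ws := by
    intro i j hj
    have h1 := entry_le_row w i j
    have h2 := hwrow i
    simp only [hWsdef, Set.mem_setOf_eq]
    omega
  have hzuniq : ∀ {i j}, z (i, j) = 1 → j = jz i := by
    intro i j hj
    exact row_unique (hzrow i) hj (hjz1 i (memZ hj))
  have hwuniq : ∀ {i j}, w (i, j) = 1 → j = jw i := by
    intro i j hj
    exact row_unique (hwrow i) hj (hjw1 i (memW hj))
  set Zsupp : Set (Fin d × Fin n) := {p | z p = 1} with hZsupp
  set Wsupp : Set (Fin d × Fin n) := {p | w p = 1} with hWsupp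
  have hZchar : ∀ p : Fin d × Fin n, p ∈ Zsupp ↔ p.1 ∈ Zs ∧ p.2 = jz p.1 := by
    intro p
    constructor
    · intro hp
      exact ⟨memZ hp, hzuniq hp⟩
    · rintro ⟨h1, h2⟩
      have := hjz1 _ h1
      simp only [hZsupp, Set.mem_setOf_eq]
      rw [show p = (p.1, p.2) from rfl, h2]
      exact this
  refine ⟨fun p => (π p.1, jw (π p.1)), ⟨?_, ?_, ?_⟩, ?_⟩
  · -- MapsTo
    intro p hp
    have h1 : p.1 ∈ Zs := memZ hp
    have h2 : π p.1 ∈ Ws := hπ.mapsTo h1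
    exact hjw1 _ h2
  · -- InjOn
    intro p hp q hq heq
    have h1 : π p.1 = π q.1 := congrArg Prod.fst heq
    have h2 : p.1 = q.1 := hπ.injOn (memZ hp) (memZ hq) h1
    have h3 : p.2 = jz p.1 := hzuniq hp
    have h4 : q.2 = jz q.1 := hzuniq hq
    exact Prod.ext h2 (by rw [h3, h4, h2])
  · -- SurjOn
    intro q hq
    have h1 : q.1 ∈ Ws := memW hq
    obtain ⟨i, hi, hπi⟩ := hπ.surjOn h1
    refine ⟨(i, jz i), (hZchar (i, jz i)).mpr ⟨hi, rfl⟩, ?_⟩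
    have h2 : q.2 = jw q.1 := hwuniq hq
    simp only
    rw [hπi, ← h2]
  · -- swap property
    intro I hI
    set I₀ : Set (Fin d) := {i | (i, jz i) ∈ I} with hI₀def
    have hI₀ : I₀ ⊆ Zs := by
      intro i hi
      exact memZ (hI hi)
    have hIchar : ∀ p : Fin d × Fin n, p ∈ I ↔ p.1 ∈ I₀ ∧ p.2 = jz p.1 := by
      intro p
      constructor
      · intro hp
        have hps : p ∈ Zsupp := hI hp
        have h2 : p.2 = jz p.1 := hzuniq hps
        refine ⟨?_, h2⟩
        simp only [hI₀def, Set.mem_setOf_eq]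
        rw [show (p.1, jz p.1) = p from by rw [← h2]]
        exact hp
      · rintro ⟨h1, h2⟩
        have : (p.1, jz p.1) ∈ I := h1
        rw [show p = (p.1, p.2) from rfl, h2]
        exact this
    have hB := hswap I₀ hI₀
    set A : Set (Fin d) := π '' I₀ with hAdef
    set C : Set (Fin d) := Zs \ I₀ with hCdef
    -- disjointness of A and C via cardinality
    have hzind : indFun Zs = projRow n z := by
      funext i
      rw [indFun_apply]
      by_cases hi : i ∈ Zs
      · rw [if_pos hi]
        exact (Set.mem_setOf_eq ▸ hi).symm
      · rw [if_neg hi]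
        have h2 := hzrow i
        have h3 : ¬ projRow n z i = 1 := hi
        omega
    have hsumB : (A ∪ C).ncard = Zs.ncard := by
      have h1 := base_sum_eq hM hB hzB
      rw [sum_indFun] at h1
      rw [← sum_indFun Zs, hzind]
      exact h1
    have hAcard : A.ncard = I₀.ncard := Set.ncard_image_of_injOn (hπ.injOn.mono hI₀)
    have hCcard : C.ncard = Zs.ncard - I₀.ncard := Set.ncard_diff hI₀
    have hIle : I₀.ncard ≤ Zs.ncard := Set.ncard_le_ncard hI₀ (Set.toFinite _)
    have hinter : (A ∩ C).ncard = 0 := by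
      have h1 := Set.ncard_union_add_ncard_inter A C
      omega
    have hdisj : ∀ i, i ∈ A → i ∉ C := by
      intro i hiA hiC
      have : A ∩ C = ∅ := (Set.ncard_eq_zero (Set.toFinite _)).mp hinter
      have h2 : i ∈ A ∩ C := ⟨hiA, hiC⟩
      rw [this] at h2
      exact h2
    -- the new lifted set and its rows
    set N : Set (Fin d × Fin n) :=
      (fun p : Fin d × Fin n => (π p.1, jw (π p.1))) '' I ∪ (Zsupp \ I) with hNdef
    have hNchar : ∀ i j, (i, j) ∈ N ↔ (i ∈ A ∧ j = jw i) ∨ (i ∈ C ∧ j = jz i) := by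
      intro i j
      constructor
      · rintro (⟨p, hp, hpeq⟩ | ⟨h1, h2⟩)
        · obtain ⟨hp1, hp2⟩ := (hIchar p).mp hp
          have hi : i = π p.1 := (congrArg Prod.fst hpeq).symm
          have hj : j = jw (π p.1) := (congrArg Prod.snd hpeq).symm
          exact Or.inl ⟨⟨p.1, hp1, hi.symm⟩, by rw [hj, hi]⟩
        · have h3 := (hZchar (i, j)).mp h1
          refine Or.inr ⟨⟨h3.1, fun hI0 => ?_⟩, h3.2⟩
          exact h2 ((hIchar (i, j)).mpr ⟨hI0, h3.2⟩)
      · rintro (⟨⟨i₀, hi₀, hπi₀⟩, hj⟩ | ⟨⟨h1, h2⟩, hj⟩)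
        · exact Or.inl ⟨(i₀, jz i₀), (hIchar _).mpr ⟨hi₀, rfl⟩, by simp only; rw [hπi₀, ← hj]⟩
        · refine Or.inr ⟨(hZchar (i, j)).mpr ⟨h1, hj⟩, fun hmem => ?_⟩
          exact h2 ((hIchar (i, j)).mp hmem).1
    have hproj : projRow n (indFun N) = indFun (A ∪ C) := by
      funext i
      have hval : ∀ j, indFun N (i, j) = if (i, j) ∈ N then 1 else 0 := fun j => indFun_apply N _
      by_cases hiA : i ∈ A
      · have hrow : ∀ j, indFun N (i, j) = if j = jw i then 1 else 0 := by
          intro j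
          rw [hval j]
          by_cases hj : j = jw i
          · rw [if_pos hj, if_pos ((hNchar i j).mpr (Or.inl ⟨hiA, hj⟩))]
          · rw [if_neg hj, if_neg]
            intro hmem
            rcases (hNchar i j).mp hmem with ⟨_, h⟩ | ⟨hC, _⟩
            · exact hj h
            · exact hdisj i hiA hC
        unfold projRow
        rw [Finset.sum_congr rfl (fun j _ => hrow j), Finset.sum_ite_eq' Finset.univ (jw i) (fun _ => 1),
          if_pos (Finset.mem_univ _), indFun_apply, if_pos (Set.mem_union_left C hiA)]
      · by_cases hiC : i ∈ C
        · have hrow : ∀ j, indFun N (i, j) = if j = jz i then 1 else 0 := by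
            intro j
            rw [hval j]
            by_cases hj : j = jz i
            · rw [if_pos hj, if_pos ((hNchar i j).mpr (Or.inr ⟨hiC, hj⟩))]
            · rw [if_neg hj, if_neg]
              intro hmem
              rcases (hNchar i j).mp hmem with ⟨hA', _⟩ | ⟨_, h⟩
              · exact hiA hA'
              · exact hj h
          unfold projRow
          rw [Finset.sum_congr rfl (fun j _ => hrow j), Finset.sum_ite_eq' Finset.univ (jz i) (fun _ => 1),
            if_pos (Finset.mem_univ _), indFun_apply, if_pos (Set.mem_union_right A hiC)]
        · have hrow : ∀ j, indFun N (i, j) = 0 := by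
            intro j
            rw [hval j, if_neg]
            intro hmem
            rcases (hNchar i j).mp hmem with ⟨hA', _⟩ | ⟨hC', _⟩
            · exact hiA hA'
            · exact hiC hC'
          unfold projRow
          rw [Finset.sum_congr rfl (fun j _ => hrow j), Finset.sum_const_zero, indFun_apply,
            if_neg (fun h => ((Set.mem_union i A C).mp h).elim hiA hiC)]
    refine (lift_base hn hM).mpr ⟨⟨fun p => indFun_le_one _ _, ?_⟩, ?_⟩
    · rw [hproj]
      exact hB.1
    · rw [hproj]
      exact hB

end Aux3
section Aux4

variable {d n : ℕ}

lemma bracket_iff {S : Set (Fin d → ℕ)} (h01 : ∀ v ∈ S, ∀ i, v i ≤ 1)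
    (x : Fin d → Fin n → ℕ) :
    x ∈ SBracket n S ↔ (fun p : Fin d × Fin n => x p.1 p.2) ∈ NUnion n (Lift n S) := by
  classical
  constructor
  · rintro ⟨y, hy, hEqv⟩
    choose σ hσ using hEqv
    refine ⟨fun k p => if σ p.1 p.2 = k then y p.1 k else 0, fun k => ⟨?_, ?_⟩, ?_, ?_⟩
    · intro p
      dsimp only
      split
      · exact h01 _ (hy k) p.1
      · omega
    · have hcol : projRow n (fun p => if σ p.1 p.2 = k then y p.1 k else 0) = fun i => y i k := by
        funext i
        unfold projRow
        simp only
        rw [Fintype.sum_equiv (σ i) (fun j => if σ i j = k then y i k else 0)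
          (fun m => if m = k then y i k else 0) (fun j => rfl),
          Finset.sum_ite_eq' Finset.univ k (fun _ => y i k), if_pos (Finset.mem_univ k)]
      rw [hcol]
      exact hy k
    · intro k l hkl p
      by_cases h : σ p.1 p.2 = k
      · right
        simp only [if_neg (h ▸ hkl)]
      · left
        simp only [if_neg h]
    · intro p
      simp only
      rw [Finset.sum_ite_eq Finset.univ (σ p.1 p.2) (fun k => y p.1 k),
        if_pos (Finset.mem_univ _)]
      exact hσ p.1 p.2
  · rintro ⟨f, hfL, hdisj, hsum⟩
    refine ⟨fun i k => projRow n (f k) i, fun k => (hfL k).2, ?_⟩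
    intro i
    -- row facts
    have hrow : ∀ k, projRow n (f k) i ≤ 1 := fun k => h01 _ (hfL k).2 i
    have hle1 : ∀ k p, f k p ≤ 1 := fun k => (hfL k).1
    have huniqk : ∀ {j k k'}, f k (i, j) = 1 → f k' (i, j) = 1 → k = k' := by
      intro j k k' h1 h2
      by_contra hne
      rcases hdisj k k' hne (i, j) with h | h <;> omega
    set J : Set (Fin n) := {j | ∃ k, f k (i, j) = 1} with hJdef
    set K : Set (Fin n) := {k | ∃ j', f k (i, j') = 1} with hKdef
    set φ : Fin n → Fin n := fun j => if h : ∃ k, f k (i, j) = 1 then h.choose else j with hφdef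
    have hφ1 : ∀ j ∈ J, f (φ j) (i, j) = 1 := by
      intro j hj
      have h : ∃ k, f k (i, j) = 1 := hj
      simp only [hφdef, dif_pos h]
      exact h.choose_spec
    have hmapsTo : ∀ j ∈ J, φ j ∈ K := fun j hj => ⟨j, hφ1 j hj⟩
    have hinj : ∀ j ∈ J, ∀ j' ∈ J, φ j = φ j' → j = j' := by
      intro j hj j' hj' heq
      exact row_unique (hrow (φ j)) (hφ1 j hj) (heq ▸ hφ1 j' hj')
    have hsurj : ∀ k ∈ K, ∃ j ∈ J, φ j = k := by
      rintro k ⟨j, hj⟩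
      have hjJ : j ∈ J := ⟨k, hj⟩
      exact ⟨j, hjJ, (huniqk (hφ1 j hjJ) hj)⟩
    -- build the permutation
    set e₁ : J ≃ K := Equiv.ofBijective (fun j => (⟨φ j.1, hmapsTo j.1 j.2⟩ : K))
      ⟨fun a b hab => Subtype.ext (hinj a.1 a.2 b.1 b.2 (congrArg Subtype.val hab)),
       fun k => by
        obtain ⟨j, hjJ, hjk⟩ := hsurj k.1 k.2
        exact ⟨⟨j, hjJ⟩, Subtype.ext hjk⟩⟩ with he₁
    have hcard : Fintype.card ↥(Jᶜ) = Fintype.card ↥(Kᶜ) := by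
      rw [Fintype.card_compl_set, Fintype.card_compl_set, Fintype.card_congr e₁]
    set e₂ : ↥(Jᶜ) ≃ ↥(Kᶜ) := Fintype.equivOfCardEq hcard with he₂
    set σ : Equiv.Perm (Fin n) :=
      ((Equiv.Set.sumCompl J).symm.trans ((e₁.sumCongr e₂).trans (Equiv.Set.sumCompl K))) with hσdef
    have hσJ : ∀ j (hj : j ∈ J), σ j = φ j := by
      intro j hj
      simp only [hσdef, Equiv.trans_apply, Equiv.Set.sumCompl_symm_apply_of_mem hj,
        Equiv.sumCongr_apply, Sum.map_inl, Equiv.Set.sumCompl_apply_inl]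
      rfl
    have hσnJ : ∀ j (hj : j ∉ J), σ j ∉ K := by
      intro j hj
      simp only [hσdef, Equiv.trans_apply, Equiv.Set.sumCompl_symm_apply_of_notMem hj,
        Equiv.sumCongr_apply, Sum.map_inr, Equiv.Set.sumCompl_apply_inr]
      exact (e₂ ⟨j, hj⟩).2
    refine ⟨σ, fun j => ?_⟩
    show x i j = projRow n (f (σ j)) i
    have hx : x i j = ∑ k, f k (i, j) := hsum (i, j)
    by_cases hj : j ∈ J
    · rw [hσJ j hj]
      have h1 : f (φ j) (i, j) = 1 := hφ1 j hj
      have hx1 : x i j = 1 := by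
        rw [hx, Finset.sum_eq_single (φ j)]
        · exact h1
        · intro k _ hk
          rcases hdisj k (φ j) hk (i, j) with h | h
          · exact h
          · omega
        · intro h; exact absurd (Finset.mem_univ _) h
      have hy1 : projRow n (f (φ j)) i = 1 := by
        have := entry_le_row (f (φ j)) i j
        have := hrow (φ j)
        omega
      rw [hx1, hy1]
    · have hx0 : x i j = 0 := by
        rw [hx]
        refine Finset.sum_eq_zero (fun k _ => ?_)
        have h1 := hle1 k (i, j)
        have h2 : ¬ f k (i, j) = 1 := fun h => hj ⟨k, h⟩
        omega
      have hK := hσnJ j hj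
      have hy0 : projRow n (f (σ j)) i = 0 := by
        refine Finset.sum_eq_zero (fun j' _ => ?_)
        have h1 := hle1 (σ j) (i, j')
        have h2 : ¬ f (σ j) (i, j') = 1 := fun h => hK ⟨j', h⟩
        omega
      rw [hx0, hy0]

end Aux4

/-- For strongly base orderable matroids `S₁, S₂`, `[S₁ⁿ] ∩ [S₂ⁿ] = [(S₁ ∩ S₂)ⁿ]`.
The Davies–McDiarmid theorem (on the ground set `[d] × [n]`) is assumed as the
hypothesis `hDM`. -/
theorem stmt12 (d n : ℕ) (hn : 0 < n) (S₁ S₂ : Set (Fin d → ℕ))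
    (hM₁ : IsMatroid S₁) (hM₂ : IsMatroid S₂)
    (hSBO₁ : IsSBO S₁) (hSBO₂ : IsSBO S₂)
    (hDM : ∀ T₁ T₂ : Set (Fin d × Fin n → ℕ),
      IsMatroid T₁ → IsMatroid T₂ → IsSBO T₁ → IsSBO T₂ →
      NUnion n T₁ ∩ NUnion n T₂ = NUnion n (T₁ ∩ T₂)) :
    SBracket n S₁ ∩ SBracket n S₂ = SBracket n (S₁ ∩ S₂) := by
  have key := hDM (Lift n S₁) (Lift n S₂) (lift_matroid hM₁) (lift_matroid hM₂)
    (lift_sbo hn hM₁ hSBO₁) (lift_sbo hn hM₂ hSBO₂)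
  rw [lift_inter] at key
  have h12 : ∀ v ∈ S₁ ∩ S₂, ∀ i, v i ≤ 1 := fun v hv => hM₁.1 v hv.1
  ext x
  constructor
  · rintro ⟨h1, h2⟩
    have u1 := (bracket_iff hM₁.1 x).mp h1
    have u2 := (bracket_iff hM₂.1 x).mp h2
    have hmem : (fun p : Fin d × Fin n => x p.1 p.2) ∈
        NUnion n (Lift n S₁) ∩ NUnion n (Lift n S₂) := ⟨u1, u2⟩
    rw [key] at hmem
    exact (bracket_iff h12 x).mpr hmem
  · intro h
    have hmem := (bracket_iff h12 x).mp h
    rw [← key] at hmem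
    exact ⟨(bracket_iff hM₁.1 x).mpr hmem.1, (bracket_iff hM₂.1 x).mpr hmem.2⟩
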